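/- Let A be an n×n matrix over a commutative ring, n ≥ 2. Then det(A) · det(A with first and last rows and first and last columns deleted) = det(A with first row and first column deleted) · det(A with last row and last column deleted) − det(A with first row and last column deleted) · det(A with last row and first column deleted). -/

import Mathlib

open Matrix

namespace DesnanotJacobiAux

/-- The map sending the two-element block to the first and last indices and the
`Fin n` block to the middle indices. -/
def f (n : ℕ) : Fin 2 ⊕ Fin n → Fin (n + 2) :=
  Sum.elim (fun a => if a = 0 then 0 else Fin.last (n + 1)) fun k => k.succ.castSucc

lemma f_inj (n : ℕ) : Function.Injective (f n) := by
  intro x y h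
  rcases x with a | k <;> rcases y with b | l
  · fin_cases a <;> fin_cases b <;> simp [f] at h ⊢ <;> simp [Fin.ext_iff] at h
  · fin_cases a <;> simp [f] at h ⊢ <;> simp [Fin.ext_iff] at h <;> omega
  · fin_cases b <;> simp [f] at h ⊢ <;> simp [Fin.ext_iff] at h <;> omega
  · simp only [f, Sum.elim_inr] at h
    have : (k : ℕ) = (l : ℕ) := by
      have := congrArg Fin.val h
      simpa using this
    exact congrArg Sum.inr (Fin.ext this)

/-- The reindexing equivalence. -/
noncomputable def e (n : ℕ) : Fin 2 ⊕ Fin n ≃ Fin (n + 2) :=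
  Equiv.ofBijective (f n)
    ((Fintype.bijective_iff_injective_and_card _).2 ⟨f_inj n, by
      simp only [Fintype.card_sum, Fintype.card_fin]; omega⟩)

lemma e_inl0 (n : ℕ) : e n (Sum.inl 0) = 0 := by simp [e, f]
lemma e_inl1 (n : ℕ) : e n (Sum.inl 1) = Fin.last (n + 1) := by simp [e, f]
lemma e_inr (n : ℕ) (k : Fin n) : e n (Sum.inr k) = k.succ.castSucc := rfl

lemma mid_ne_zero (n : ℕ) (k : Fin n) : (k.succ.castSucc : Fin (n + 2)) ≠ 0 := by
  simp [Fin.ext_iff]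

lemma mid_ne_last (n : ℕ) (k : Fin n) : (k.succ.castSucc : Fin (n + 2)) ≠ Fin.last (n + 1) := by
  simp [Fin.ext_iff]; omega

lemma zero_ne_last (n : ℕ) : (0 : Fin (n + 2)) ≠ Fin.last (n + 1) := by
  simp [Fin.ext_iff]

/-- Key lemma over a domain, assuming the determinant is nonzero. -/
theorem key {R : Type*} [CommRing R] [IsDomain R] (n : ℕ)
    (A : Matrix (Fin (n + 2)) (Fin (n + 2)) R) (hA : A.det ≠ 0) :
    A.det *
      (A.submatrix (fun i : Fin n => i.succ.castSucc) (fun j : Fin n => j.succ.castSucc)).det =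
    (A.submatrix (Fin.succ : Fin (n + 1) → Fin (n + 2)) (Fin.succ : Fin (n + 1) → Fin (n + 2))).det *
      (A.submatrix (Fin.castSucc : Fin (n + 1) → Fin (n + 2)) (Fin.castSucc : Fin (n + 1) → Fin (n + 2))).det -
    (A.submatrix (Fin.succ : Fin (n + 1) → Fin (n + 2)) (Fin.castSucc : Fin (n + 1) → Fin (n + 2))).det *
      (A.submatrix (Fin.castSucc : Fin (n + 1) → Fin (n + 2)) (Fin.succ : Fin (n + 1) → Fin (n + 2))).det := by
  classical
  set B := adjugate A with hB
  -- the auxiliary matrix D : identity with first and last columns replaced by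
  -- the corresponding columns of the adjugate
  set D : Matrix (Fin (n + 2)) (Fin (n + 2)) R := fun i j =>
    if j = 0 then B i 0 else if j = Fin.last (n + 1) then B i (Fin.last (n + 1))
      else if i = j then 1 else 0 with hD
  -- entries of A * D
  have hAD0 : ∀ i, (A * D) i 0 = A.det * (1 : Matrix (Fin (n+2)) (Fin (n+2)) R) i 0 := by
    intro i
    have h1 : (A * D) i 0 = (A * B) i 0 := by
      simp only [Matrix.mul_apply]; simp only [hD]
      refine Finset.sum_congr rfl fun k _ => ?_
      simp
    rw [h1, hB, Matrix.mul_adjugate, Matrix.smul_apply, smul_eq_mul]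
  have hADl : ∀ i, (A * D) i (Fin.last (n+1)) =
      A.det * (1 : Matrix (Fin (n+2)) (Fin (n+2)) R) i (Fin.last (n+1)) := by
    intro i
    have h1 : (A * D) i (Fin.last (n+1)) = (A * B) i (Fin.last (n+1)) := by
      simp only [Matrix.mul_apply]; simp only [hD]
      refine Finset.sum_congr rfl fun k _ => ?_
      simp [(zero_ne_last n).symm]
    rw [h1, hB, Matrix.mul_adjugate, Matrix.smul_apply, smul_eq_mul]
  have hADmid : ∀ i (k : Fin n), (A * D) i k.succ.castSucc = A i k.succ.castSucc := by
    intro i k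
    rw [Matrix.mul_apply]
    have h1 : ∀ j : Fin (n+2), A i j * D j k.succ.castSucc =
        if j = k.succ.castSucc then A i j else 0 := by
      intro j
      simp only [hD, if_neg (mid_ne_zero n k), if_neg (mid_ne_last n k)]
      by_cases hjk : j = k.succ.castSucc <;> simp [hjk]
    rw [Finset.sum_congr rfl fun j _ => h1 j,
      Finset.sum_ite_eq' Finset.univ k.succ.castSucc (A i)]
    simp
  -- block decompositions
  have hDblock : (D.submatrix (e n) (e n)) =
      Matrix.fromBlocks
        !![B 0 0, B 0 (Fin.last (n+1)); B (Fin.last (n+1)) 0, B (Fin.last (n+1)) (Fin.last (n+1))]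
        (Matrix.of fun a k => D (e n (Sum.inl a)) (e n (Sum.inr k)))
        (Matrix.of fun k a => D (e n (Sum.inr k)) (e n (Sum.inl a))) 1 := by
    ext (a | k) (b | l)
    · fin_cases a <;> fin_cases b <;>
        (simp only [Matrix.submatrix_apply]; simp [e_inl0, e_inl1, hD, zero_ne_last n, (zero_ne_last n).symm])
    · rfl
    · rfl
    · simp only [Matrix.submatrix_apply, e_inr, Matrix.fromBlocks_apply₂₂]
      have hkl : ((k.succ.castSucc : Fin (n+2)) = l.succ.castSucc) ↔ k = l := by
        simp [Fin.ext_iff]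
      by_cases h : k = l
      · subst h
        simp [hD, mid_ne_zero n k, mid_ne_last n k, Matrix.one_apply]
      · simp [hD, mid_ne_zero n l, mid_ne_last n l, hkl, h, Matrix.one_apply]
  have hDzero : (Matrix.of fun a k => D (e n (Sum.inl a)) (e n (Sum.inr k))) = 0 := by
    ext a k
    fin_cases a <;>
      simp [e_inl0, e_inl1, e_inr, hD, mid_ne_zero n k, (mid_ne_zero n k).symm,
        mid_ne_last n k, (mid_ne_last n k).symm, Fin.succ_ne_zero,
        (by simpa [eq_comm] using mid_ne_last n k : ¬Fin.last (n + 1) = k.castSucc.succ),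
        (Fin.succ_ne_zero k.castSucc).symm]
  have hdetD : D.det = B 0 0 * B (Fin.last (n+1)) (Fin.last (n+1)) -
      B 0 (Fin.last (n+1)) * B (Fin.last (n+1)) 0 := by
    rw [← Matrix.det_submatrix_equiv_self (e n), hDblock, hDzero,
      Matrix.det_fromBlocks_zero₁₂, Matrix.det_one, mul_one, Matrix.det_fin_two_of]
  -- determinant of A * D
  have hEblock : ((A * D).submatrix (e n) (e n)) =
      Matrix.fromBlocks (A.det • (1 : Matrix (Fin 2) (Fin 2) R))
        (Matrix.of fun a k => (A * D) (e n (Sum.inl a)) (e n (Sum.inr k)))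
        0 (A.submatrix (fun i : Fin n => i.succ.castSucc) fun j : Fin n => j.succ.castSucc) := by
    ext (a | k) (b | l)
    · fin_cases a <;> fin_cases b <;>
        simp [e_inl0, e_inl1, hAD0, hADl, Matrix.one_apply, zero_ne_last n,
          (zero_ne_last n).symm]
    · rfl
    · fin_cases b <;>
        simp [e_inl0, e_inl1, e_inr, hAD0, hADl, Matrix.one_apply, mid_ne_zero n k,
          mid_ne_last n k]
    · simp only [Matrix.submatrix_apply, e_inr, Matrix.fromBlocks_apply₂₂, hADmid]
  have hdetE : (A * D).det = A.det ^ 2 *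
      (A.submatrix (fun i : Fin n => i.succ.castSucc) fun j : Fin n => j.succ.castSucc).det := by
    rw [← Matrix.det_submatrix_equiv_self (e n), hEblock, Matrix.det_fromBlocks_zero₂₁,
      Matrix.det_smul, Matrix.det_one, mul_one]
    simp [sq]
  -- cancellation
  have hmain : D.det = A.det *
      (A.submatrix (fun i : Fin n => i.succ.castSucc) fun j : Fin n => j.succ.castSucc).det := by
    have h := hdetE
    rw [Matrix.det_mul, sq, mul_assoc] at h
    exact mul_left_cancel₀ hA h
  rw [← hmain, hdetD]
  -- rewrite adjugate entries as minors
  have h00 : B 0 0 = (A.submatrix (Fin.succ : Fin (n+1) → Fin (n+2)) Fin.succ).det := by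
    rw [hB, adjugate_fin_succ_eq_det_submatrix]
    simp [Fin.succAbove_zero]
  have hllll : B (Fin.last (n+1)) (Fin.last (n+1)) =
      (A.submatrix (Fin.castSucc : Fin (n+1) → Fin (n+2)) Fin.castSucc).det := by
    rw [hB, adjugate_fin_succ_eq_det_submatrix]
    simp only [Fin.succAbove_last, Fin.val_last, ← two_mul, pow_mul, neg_one_sq, one_pow,
      one_mul]
  have h0l : B 0 (Fin.last (n+1)) = (-1 : R) ^ (n + 1) *
      (A.submatrix (Fin.castSucc : Fin (n+1) → Fin (n+2)) Fin.succ).det := by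
    rw [hB, adjugate_fin_succ_eq_det_submatrix]
    simp [Fin.succAbove_last, Fin.succAbove_zero]
  have hl0 : B (Fin.last (n+1)) 0 = (-1 : R) ^ (n + 1) *
      (A.submatrix (Fin.succ : Fin (n+1) → Fin (n+2)) Fin.castSucc).det := by
    rw [hB, adjugate_fin_succ_eq_det_submatrix]
    simp [Fin.succAbove_last, Fin.succAbove_zero]
  rw [h00, hllll, h0l, hl0]
  have hsign : ((-1 : R) ^ (n + 1)) * ((-1 : R) ^ (n + 1)) = 1 := by
    rw [← pow_add, ← two_mul, pow_mul, neg_one_sq, one_pow]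
  linear_combination (-((A.submatrix (Fin.castSucc : Fin (n+1) → Fin (n+2)) Fin.succ).det *
    (A.submatrix (Fin.succ : Fin (n+1) → Fin (n+2)) Fin.castSucc).det)) * hsign

end DesnanotJacobiAux

/-- Desnanot–Jacobi (Dodgson condensation) identity. -/
theorem stmt0 {R : Type*} [CommRing R] (n : ℕ) (A : Matrix (Fin (n + 2)) (Fin (n + 2)) R) :
    A.det *
      (A.submatrix (fun i : Fin n => i.succ.castSucc) (fun j : Fin n => j.succ.castSucc)).det =
    (A.submatrix (Fin.succ : Fin (n + 1) → Fin (n + 2)) (Fin.succ : Fin (n + 1) → Fin (n + 2))).det *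
      (A.submatrix (Fin.castSucc : Fin (n + 1) → Fin (n + 2)) (Fin.castSucc : Fin (n + 1) → Fin (n + 2))).det -
    (A.submatrix (Fin.succ : Fin (n + 1) → Fin (n + 2)) (Fin.castSucc : Fin (n + 1) → Fin (n + 2))).det *
      (A.submatrix (Fin.castSucc : Fin (n + 1) → Fin (n + 2)) (Fin.succ : Fin (n + 1) → Fin (n + 2))).det := by
  classical
  -- generic matrix
  set G : Matrix (Fin (n + 2)) (Fin (n + 2)) (MvPolynomial (Fin (n + 2) × Fin (n + 2)) ℤ) :=
    fun i j => MvPolynomial.X (i, j) with hG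
  have hGdet : G.det ≠ 0 := by
    intro h
    set v : Fin (n + 2) × Fin (n + 2) → ℤ := fun p => if p.1 = p.2 then 1 else 0 with hv
    have h2 : (MvPolynomial.eval v).mapMatrix G = (1 : Matrix (Fin (n + 2)) (Fin (n + 2)) ℤ) := by
      ext i j
      rw [RingHom.mapMatrix_apply, Matrix.map_apply]
      simp [hG, hv, Matrix.one_apply]
    have h3 := RingHom.map_det (MvPolynomial.eval v) G
    rw [h2, Matrix.det_one, h, map_zero] at h3
    exact one_ne_zero h3.symm
  have hkey := DesnanotJacobiAux.key n G hGdet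
  set φ : MvPolynomial (Fin (n + 2) × Fin (n + 2)) ℤ →+* R :=
    (MvPolynomial.eval₂Hom (Int.castRingHom R) fun p => A p.1 p.2) with hφ
  have hdet0 : φ G.det = A.det := by
    rw [RingHom.map_det]
    congr 1
    ext i j
    rw [RingHom.mapMatrix_apply, Matrix.map_apply]
    simp [hG, hφ]
  have hsub : ∀ {m : ℕ} (r c : Fin m → Fin (n + 2)),
      φ (G.submatrix r c).det = (A.submatrix r c).det := by
    intro m r c
    rw [RingHom.map_det]
    congr 1
    ext i j
    rw [RingHom.mapMatrix_apply, Matrix.map_apply, Matrix.submatrix_apply]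
    simp [hG, hφ]
  have h := congrArg φ hkey
  rw [_root_.map_mul, _root_.map_sub, _root_.map_mul, _root_.map_mul, hdet0,
    hsub, hsub, hsub, hsub, hsub] at h
  exact h
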